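/- (Random Target Lemma for OQWs.) With the hypotheses of the Mean Hitting Time Formula for OQWs, D̂ invertible, and Tr(k̂_{ii}(η)) = c·Tr(η) for all i and η, the target time t_⊙(ρ) := ∑_{i=1}^k Tr((D̂^{−1}N̂)_{ij}(ρ)) does not depend on j; in fact for every density matrix ρ and every j, ∑_{i=1}^k Tr((D̂^{−1}N̂)_{ij}(ρ)) = (∑_{i=1}^k Tr(Ẑ_{ii}(ρ))) − 1. -/

import Mathlib

open Matrix Filter
open scoped ComplexOrder

noncomputable section

abbrev Mn (n : ℕ) : Type := Matrix (Fin n) (Fin n) ℂ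

abbrev BlockVec (n k : ℕ) : Type := Fin k → Mn n

/-- An open quantum random walk on `k` sites with degree of freedom `n`:
`∑ i, (B i j)ᴴ (B i j) = 1` for every `j`. -/
def IsOQW {n k : ℕ} (B : Fin k → Fin k → Mn n) : Prop :=
  ∀ j : Fin k, ∑ i : Fin k, (B i j)ᴴ * B i j = 1

/-- The block representation `Φ̂`: `(Φ̂ ρ) i = ∑ j, B i j * ρ j * (B i j)ᴴ`. -/
def blockRep {n k : ℕ} (B : Fin k → Fin k → Mn n) : Module.End ℂ (BlockVec n k) :=
  LinearMap.pi fun i => ∑ j : Fin k,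
    (LinearMap.mulRight ℂ (B i j)ᴴ).comp ((LinearMap.mulLeft ℂ (B i j)).comp (LinearMap.proj j))

/-- The map `Ω̂`: `(Ω̂ ρ) p = (1/(k n)) (∑ j, Tr (ρ j)) • 1` for every `p`. -/
def omegaMap (n k : ℕ) : Module.End ℂ (BlockVec n k) :=
  LinearMap.pi fun _ =>
    (LinearMap.toSpanSingleton ℂ (Mn n) (((k : ℂ) * (n : ℂ))⁻¹ • (1 : Mn n))).comp
      (∑ j : Fin k, (Matrix.traceLinearMap (Fin n) ℂ ℂ).comp (LinearMap.proj j))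

/-- Ergodic OQW: the iterates of the block representation converge to `Ω̂`. -/
def IsErgodic {n k : ℕ} (B : Fin k → Fin k → Mn n) : Prop :=
  ∀ ρ : BlockVec n k,
    Tendsto (fun r : ℕ => (blockRep B ^ r) ρ) atTop (nhds (omegaMap n k ρ))

/-- The product `B (x r) (x (r-1)) * ⋯ * B (x 1) (x 0)` along a path `x`. -/
def pathProd {n k : ℕ} (B : Fin k → Fin k → Mn n) : (r : ℕ) → (Fin (r+1) → Fin k) → Mn n
  | 0, _ => 1
  | r+1, x => B (x (Fin.last (r+1))) (x (Fin.last r).castSucc) *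
      pathProd B r (fun s => x s.castSucc)

/-- The index set of `π(i ← j; r)`: paths `x_0 = j, x_1, …, x_r = i` with `x_s ≠ i`
for `1 ≤ s ≤ r - 1`. -/
def pathsSet (k : ℕ) (i j : Fin k) (r : ℕ) : Finset (Fin (r+1) → Fin k) :=
  Finset.univ.filter fun x => x 0 = j ∧ x (Fin.last r) = i ∧
    ∀ s : Fin (r+1), s ≠ 0 → s ≠ Fin.last r → x s ≠ i

/-- The mean hitting time operator `k̂_{ij}(X) = ∑_{r ≥ 1} r ∑_{C ∈ π(i←j;r)} C X Cᴴ`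
(mean return time operator when `i = j`). -/
def khat {n k : ℕ} (B : Fin k → Fin k → Mn n) (i j : Fin k) (X : Mn n) : Mn n :=
  ∑' r : ℕ, ((r + 1 : ℕ) : ℂ) • ∑ x ∈ pathsSet k i j (r+1),
    pathProd B (r+1) x * X * (pathProd B (r+1) x)ᴴ

/-- The hitting probability `h_{ij}(σ) = ∑_{r ≥ 1} ∑_{C ∈ π(i←j;r)} Tr(C σ Cᴴ)`. -/
def hitSum {n k : ℕ} (B : Fin k → Fin k → Mn n) (i j : Fin k) (σ : Mn n) : ℂ :=
  ∑' r : ℕ, ∑ x ∈ pathsSet k i j (r+1),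
    (pathProd B (r+1) x * σ * (pathProd B (r+1) x)ᴴ).trace

/-- The `(i,j)` block of an operator on block vectors. -/
def blockOf {n k : ℕ} (T : Module.End ℂ (BlockVec n k)) (i j : Fin k) (X : Mn n) : Mn n :=
  T (Pi.single j X) i

section AuxPath

variable {n k : ℕ} (B : Fin k → Fin k → Mn n)

lemma pathProd_peel : ∀ (r : ℕ) (x : Fin (r+2) → Fin k),
    pathProd B (r+1) x = pathProd B r (fun s => x s.succ) * B (x 1) (x 0)
  | 0, x => by
      show B (x (Fin.last 1)) (x ((Fin.last 0).castSucc)) * pathProd B 0 (fun s => x s.castSucc)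
        = pathProd B 0 (fun s => x s.succ) * B (x 1) (x 0)
      show B (x (Fin.last 1)) (x ((Fin.last 0).castSucc)) * 1 = 1 * B (x 1) (x 0)
      rw [mul_one, one_mul]
      have e1 : (Fin.last 1 : Fin 2) = 1 := rfl
      have e2 : ((Fin.last 0).castSucc : Fin 2) = 0 := rfl
      rw [e1, e2]
  | (r+1), x => by
      show B (x (Fin.last (r+2))) (x (Fin.last (r+1)).castSucc) *
          pathProd B (r+1) (fun s => x s.castSucc) = _
      rw [pathProd_peel r (fun s => x s.castSucc)]
      have h1 : (fun (s : Fin (r+1)) => x (s.succ.castSucc)) =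
          (fun s => x (s.castSucc.succ)) := by
        funext s; rw [Fin.succ_castSucc]
      have h2 : pathProd B (r+1) (fun s => x s.succ) =
          B (x (Fin.last (r+2))) (x ((Fin.last (r+1)).castSucc)) *
            pathProd B r (fun s => x (s.castSucc.succ)) := by
        show B (x ((Fin.last (r+1)).succ)) (x (((Fin.last r).castSucc).succ)) *
            pathProd B r (fun s => x (s.castSucc.succ)) = _
        rw [Fin.succ_last, Fin.succ_castSucc, Fin.succ_last]
      rw [h2, h1, Fin.castSucc_one, Fin.castSucc_zero, mul_assoc]

lemma mem_pathsSet {i j : Fin k} {r : ℕ} {x : Fin (r+1) → Fin k} :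
    x ∈ pathsSet k i j r ↔ x 0 = j ∧ x (Fin.last r) = i ∧
      ∀ s : Fin (r+1), s ≠ 0 → s ≠ Fin.last r → x s ≠ i := by
  simp [pathsSet]

lemma pathsSet_one (i j : Fin k) :
    pathsSet k i j 1 = {fun s : Fin 2 => if s = 0 then j else i} := by
  ext x
  rw [mem_pathsSet, Finset.mem_singleton]
  constructor
  · rintro ⟨h0, h1, -⟩
    funext s
    match s with
    | 0 => simpa using h0
    | 1 => simpa using h1
  · rintro rfl
    refine ⟨by simp, by simp [Fin.last], fun s hs0 hs1 => ?_⟩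
    exfalso
    apply hs1
    have := s.isLt
    have h0 : s.val ≠ 0 := fun h => hs0 (Fin.ext h)
    apply Fin.ext
    simp [Fin.last]
    omega

lemma sum_paths_succ (i j : Fin k) (r : ℕ) (φ : Mn n → ℂ) :
    ∑ x ∈ pathsSet k i j (r+2), φ (pathProd B (r+2) x) =
      ∑ l ∈ Finset.univ.filter (fun l => l ≠ i), ∑ y ∈ pathsSet k i l (r+1),
        φ (pathProd B (r+1) y * B l j) := by
  rw [← Finset.sum_sigma (Finset.univ.filter (fun l => l ≠ i))
      (fun l => pathsSet k i l (r+1))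
      (fun p => φ (pathProd B (r+1) p.2 * B p.1 j))]
  refine Finset.sum_nbij' (fun x => (⟨x 1, fun s => x s.succ⟩ :
      Σ _ : Fin k, (Fin (r+2) → Fin k)))
    (fun p => Fin.cons j p.2) ?_ ?_ ?_ ?_ ?_
  · intro x hx
    rw [mem_pathsSet] at hx
    obtain ⟨h0, hl, hint⟩ := hx
    have h1ne0 : (1 : Fin (r+3)) ≠ 0 := by
      simp [Fin.ext_iff]
    have h1nelast : (1 : Fin (r+3)) ≠ Fin.last (r+2) := by
      simp [Fin.ext_iff, Fin.last]
    refine Finset.mem_sigma.2 ⟨by simpa using hint 1 h1ne0 h1nelast, ?_⟩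
    rw [mem_pathsSet]
    refine ⟨?_, ?_, ?_⟩
    · show x ((0 : Fin (r+2)).succ) = x 1
      rw [Fin.succ_zero_eq_one]
    · show x ((Fin.last (r+1)).succ) = i
      rw [Fin.succ_last]; exact hl
    · intro s hs0 hslast
      show x s.succ ≠ i
      exact hint s.succ (Fin.succ_ne_zero s)
        (by rw [← Fin.succ_last]; exact fun h => hslast (Fin.succ_injective _ h))
  · rintro ⟨l, y⟩ hp
    dsimp only at hp ⊢
    rw [Finset.mem_sigma] at hp
    obtain ⟨hl, hy⟩ := hp
    rw [Finset.mem_filter] at hl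
    rw [mem_pathsSet] at hy ⊢
    obtain ⟨hy0, hyl, hyint⟩ := hy
    have hy0' : y 0 = l := hy0
    have hyl' : y (Fin.last (r+1)) = i := hyl
    have hyint' : ∀ s : Fin (r+2), s ≠ 0 → s ≠ Fin.last (r+1) → y s ≠ i := hyint
    have hl' : l ≠ i := hl.2
    refine ⟨by rw [Fin.cons_zero], by rw [← Fin.succ_last, Fin.cons_succ]; exact hyl', ?_⟩
    intro s hs0 hslast
    rcases Fin.eq_zero_or_eq_succ s with rfl | ⟨t, rfl⟩
    · exact absurd rfl hs0
    · rw [Fin.cons_succ]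
      rcases eq_or_ne t 0 with rfl | ht0
      · rw [hy0']; exact hl'
      · exact hyint' t ht0 (fun h => hslast (by rw [h, Fin.succ_last]))
  · intro x hx
    dsimp only
    rw [mem_pathsSet] at hx
    funext s
    rcases Fin.eq_zero_or_eq_succ s with rfl | ⟨t, rfl⟩
    · rw [Fin.cons_zero, hx.1]
    · rw [Fin.cons_succ]
  · rintro ⟨l, y⟩ hp
    dsimp only at hp ⊢
    rw [Finset.mem_sigma, mem_pathsSet] at hp
    have hy0' : y 0 = l := hp.2.1
    have h1 : (Fin.cons j y : Fin (r+3) → Fin k) 1 = l := by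
      rw [show (1 : Fin (r+3)) = Fin.succ 0 from (Fin.succ_zero_eq_one).symm, Fin.cons_succ,
        hy0']
    have h2 : (fun s : Fin (r+2) => (Fin.cons j y : Fin (r+3) → Fin k) s.succ) = y := by
      funext s; rw [Fin.cons_succ]
    rw [h1, h2]
  · intro x hx
    rw [mem_pathsSet] at hx
    rw [pathProd_peel B (r+1) x, hx.1]

end AuxPath

section AuxSum

variable {n k : ℕ} (B : Fin k → Fin k → Mn n)

/-- The matrix-valued single-`r` path sum. -/
def pmat (i j : Fin k) (X : Mn n) (r : ℕ) : Mn n :=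
  ∑ x ∈ pathsSet k i j (r+1), pathProd B (r+1) x * X * (pathProd B (r+1) x)ᴴ

/-- Its trace. -/
def tv (i j : Fin k) (X : Mn n) (r : ℕ) : ℂ := (pmat B i j X r).trace

/-- The global summability hypothesis. -/
def SumHyp {n k : ℕ} (B : Fin k → Fin k → Mn n) : Prop :=
  ∀ (i j : Fin k) (X : Mn n) (a b : Fin n),
    Summable fun r : ℕ => ((r + 1 : ℕ) : ℝ) * ‖pmat B i j X r a b‖

lemma khat_eq (i j : Fin k) (X : Mn n) :
    khat B i j X = ∑' r : ℕ, ((r + 1 : ℕ) : ℂ) • pmat B i j X r := rfl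

lemma hitSum_eq (i j : Fin k) (X : Mn n) :
    hitSum B i j X = ∑' r : ℕ, tv B i j X r := by
  refine tsum_congr fun r => ?_
  rw [tv, pmat, Matrix.trace_sum]

variable {B}

lemma summable_pmat_entry (HS : SumHyp B) (i j : Fin k) (X : Mn n) (a b : Fin n) :
    Summable fun r => pmat B i j X r a b := by
  refine Summable.of_norm (Summable.of_nonneg_of_le (fun r => norm_nonneg _)
    (fun r => ?_) (HS i j X a b))
  refine le_mul_of_one_le_left (norm_nonneg _) ?_
  exact_mod_cast Nat.succ_le_succ (Nat.zero_le r)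

lemma summable_wpmat_entry (HS : SumHyp B) (i j : Fin k) (X : Mn n) (a b : Fin n) :
    Summable fun r => ((r + 1 : ℕ) : ℂ) * pmat B i j X r a b := by
  refine Summable.of_norm ?_
  have : (fun r : ℕ => ‖((r + 1 : ℕ) : ℂ) * pmat B i j X r a b‖) =
      fun r : ℕ => ((r + 1 : ℕ) : ℝ) * ‖pmat B i j X r a b‖ := by
    funext r
    rw [norm_mul, Complex.norm_natCast]
  rw [this]
  exact HS i j X a b

lemma summable_tv (HS : SumHyp B) (i j : Fin k) (X : Mn n) :
    Summable (tv B i j X) := by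
  have : tv B i j X = fun r => ∑ a : Fin n, pmat B i j X r a a := rfl
  rw [this]
  exact summable_sum fun a _ => summable_pmat_entry HS i j X a a

lemma summable_wtv (HS : SumHyp B) (i j : Fin k) (X : Mn n) :
    Summable fun r => ((r + 1 : ℕ) : ℂ) * tv B i j X r := by
  have : (fun r => ((r + 1 : ℕ) : ℂ) * tv B i j X r) =
      fun r => ∑ a : Fin n, ((r + 1 : ℕ) : ℂ) * pmat B i j X r a a := by
    funext r
    rw [tv, Matrix.trace, Finset.mul_sum]
    rfl
  rw [this]
  exact summable_sum fun a _ => summable_wpmat_entry HS i j X a a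

lemma summable_wpmat (HS : SumHyp B) (i j : Fin k) (X : Mn n) :
    Summable fun r => ((r + 1 : ℕ) : ℂ) • pmat B i j X r := by
  refine Pi.summable.2 fun a => Pi.summable.2 fun b => ?_
  have : (fun r => (((r + 1 : ℕ) : ℂ) • pmat B i j X r) a b) =
      fun r => ((r + 1 : ℕ) : ℂ) * pmat B i j X r a b := rfl
  rw [this]
  exact summable_wpmat_entry HS i j X a b

lemma trace_khat (HS : SumHyp B) (i j : Fin k) (X : Mn n) :
    (khat B i j X).trace = ∑' r : ℕ, ((r + 1 : ℕ) : ℂ) * tv B i j X r := by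
  have hsm := summable_wpmat HS i j X
  have happ : ∀ a b : Fin n, (khat B i j X) a b =
      ∑' r : ℕ, ((r + 1 : ℕ) : ℂ) * pmat B i j X r a b := by
    intro a b
    rw [khat_eq]
    erw [tsum_apply hsm, tsum_apply (Pi.summable.1 hsm a)]
    rfl
  have h1 : (khat B i j X).trace = ∑ a : Fin n, (khat B i j X) a a := rfl
  rw [h1]
  have h2 : ∀ a : Fin n, (khat B i j X) a a =
      ∑' r : ℕ, ((r + 1 : ℕ) : ℂ) * pmat B i j X r a a := fun a => happ a a
  rw [Finset.sum_congr rfl fun a _ => h2 a]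
  rw [← Summable.tsum_finsetSum fun a _ => summable_wpmat_entry HS i j X a a]
  refine tsum_congr fun r => ?_
  rw [tv, Matrix.trace, Finset.mul_sum]
  rfl

end AuxSum

section AuxRec

variable {n k : ℕ} {B : Fin k → Fin k → Mn n}

lemma tv_succ (i j : Fin k) (X : Mn n) (r : ℕ) :
    tv B i j X (r+1) = ∑ l ∈ Finset.univ.filter (fun l => l ≠ i),
      tv B i l (B l j * X * (B l j)ᴴ) r := by
  have h1 : tv B i j X (r+1) = ∑ x ∈ pathsSet k i j (r+2),
      (pathProd B (r+2) x * X * (pathProd B (r+2) x)ᴴ).trace := by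
    rw [tv, pmat, Matrix.trace_sum]
  rw [h1, sum_paths_succ B i j r (fun C => (C * X * Cᴴ).trace)]
  refine Finset.sum_congr rfl fun l _ => ?_
  have h2 : tv B i l (B l j * X * (B l j)ᴴ) r = ∑ y ∈ pathsSet k i l (r+1),
      (pathProd B (r+1) y * (B l j * X * (B l j)ᴴ) * (pathProd B (r+1) y)ᴴ).trace := by
    rw [tv, pmat, Matrix.trace_sum]
  rw [h2]
  refine Finset.sum_congr rfl fun y _ => ?_
  rw [Matrix.conjTranspose_mul]
  congr 1
  simp only [Matrix.mul_assoc]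

lemma tv_zero (i j : Fin k) (X : Mn n) :
    tv B i j X 0 = (B i j * X * (B i j)ᴴ).trace := by
  rw [tv, pmat, pathsSet_one, Finset.sum_singleton]
  have h : pathProd B 1 (fun s : Fin 2 => if s = 0 then j else i) = B i j := by
    show B (if (Fin.last 1 : Fin 2) = 0 then j else i)
        (if ((Fin.last 0).castSucc : Fin 2) = 0 then j else i) * pathProd B 0 _ = B i j
    have e1 : (Fin.last 1 : Fin 2) = 1 := rfl
    have e2 : ((Fin.last 0).castSucc : Fin 2) = 0 := rfl
    rw [e1, e2, if_neg (by simp [Fin.ext_iff]), if_pos rfl]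
    show B i j * 1 = B i j
    rw [mul_one]
  rw [h]

lemma tv_add (i j : Fin k) (X Y : Mn n) (r : ℕ) :
    tv B i j (X + Y) r = tv B i j X r + tv B i j Y r := by
  have h : pmat B i j (X + Y) r = pmat B i j X r + pmat B i j Y r := by
    rw [pmat, pmat, pmat, ← Finset.sum_add_distrib]
    refine Finset.sum_congr rfl fun x _ => ?_
    rw [Matrix.mul_add, Matrix.add_mul]
  rw [tv, h, Matrix.trace_add, tv, tv]

lemma tv_smul (i j : Fin k) (a : ℂ) (X : Mn n) (r : ℕ) :
    tv B i j (a • X) r = a * tv B i j X r := by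
  have h : pmat B i j (a • X) r = a • pmat B i j X r := by
    rw [pmat, pmat, Finset.smul_sum]
    refine Finset.sum_congr rfl fun x _ => ?_
    rw [Matrix.mul_smul, Matrix.smul_mul]
  rw [tv, h, Matrix.trace_smul, tv, smul_eq_mul]

lemma hitSum_add (HS : SumHyp B) (i j : Fin k) (X Y : Mn n) :
    hitSum B i j (X + Y) = hitSum B i j X + hitSum B i j Y := by
  rw [hitSum_eq, hitSum_eq, hitSum_eq]
  rw [show tv B i j (X + Y) = fun r => tv B i j X r + tv B i j Y r from
    funext fun r => tv_add i j X Y r]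
  exact Summable.tsum_add (summable_tv HS i j X) (summable_tv HS i j Y)

lemma hitSum_smul (HS : SumHyp B) (i j : Fin k) (a : ℂ) (X : Mn n) :
    hitSum B i j (a • X) = a * hitSum B i j X := by
  rw [hitSum_eq, hitSum_eq]
  rw [show tv B i j (a • X) = fun r => a * tv B i j X r from
    funext fun r => tv_smul i j a X r]
  exact tsum_mul_left

lemma ktr_add (HS : SumHyp B) (i j : Fin k) (X Y : Mn n) :
    (khat B i j (X + Y)).trace = (khat B i j X).trace + (khat B i j Y).trace := by
  rw [trace_khat HS, trace_khat HS, trace_khat HS]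
  rw [show (fun r => ((r + 1 : ℕ) : ℂ) * tv B i j (X + Y) r) =
      fun r => ((r + 1 : ℕ) : ℂ) * tv B i j X r + ((r + 1 : ℕ) : ℂ) * tv B i j Y r from
    funext fun r => by rw [tv_add]; ring]
  exact Summable.tsum_add (summable_wtv HS i j X) (summable_wtv HS i j Y)

lemma ktr_smul (HS : SumHyp B) (i j : Fin k) (a : ℂ) (X : Mn n) :
    (khat B i j (a • X)).trace = a * (khat B i j X).trace := by
  rw [trace_khat HS, trace_khat HS]
  rw [show (fun r => ((r + 1 : ℕ) : ℂ) * tv B i j (a • X) r) =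
      fun r => a * (((r + 1 : ℕ) : ℂ) * tv B i j X r) from
    funext fun r => by rw [tv_smul]; ring]
  exact tsum_mul_left

lemma hitSum_rec (HS : SumHyp B) (i j : Fin k) (X : Mn n) :
    hitSum B i j X = (B i j * X * (B i j)ᴴ).trace +
      ∑ l ∈ Finset.univ.filter (fun l => l ≠ i), hitSum B i l (B l j * X * (B l j)ᴴ) := by
  rw [hitSum_eq, Summable.tsum_eq_zero_add (summable_tv HS i j X), tv_zero]
  congr 1
  calc ∑' r : ℕ, tv B i j X (r + 1)
      = ∑' r : ℕ, ∑ l ∈ Finset.univ.filter (fun l => l ≠ i),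
          tv B i l (B l j * X * (B l j)ᴴ) r := tsum_congr fun r => tv_succ i j X r
    _ = ∑ l ∈ Finset.univ.filter (fun l => l ≠ i), ∑' r : ℕ,
          tv B i l (B l j * X * (B l j)ᴴ) r :=
        Summable.tsum_finsetSum fun l _ => summable_tv HS i l _
    _ = _ := Finset.sum_congr rfl fun l _ => (hitSum_eq B i l _).symm

lemma ktr_rec (HS : SumHyp B) (i j : Fin k) (X : Mn n) :
    (khat B i j X).trace = (∑ l ∈ Finset.univ.filter (fun l => l ≠ i),
      (khat B i l (B l j * X * (B l j)ᴴ)).trace) + hitSum B i j X := by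
  have S1 := summable_wtv HS i j X
  have S3 : Summable fun r => tv B i j X (r + 1) :=
    (summable_nat_add_iff 1).2 (summable_tv HS i j X)
  have S4 : Summable fun r => ((r + 1 + 1 : ℕ) : ℂ) * tv B i j X (r + 1) := by
    have := (summable_nat_add_iff (f := fun r => ((r + 1 : ℕ) : ℂ) * tv B i j X r) 1).2 S1
    exact this
  have S5 : Summable fun r => ((r + 1 : ℕ) : ℂ) * tv B i j X (r + 1) := by
    have h : (fun r => ((r + 1 : ℕ) : ℂ) * tv B i j X (r + 1)) =
        fun r => ((r + 1 + 1 : ℕ) : ℂ) * tv B i j X (r + 1) - tv B i j X (r + 1) := by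
      funext r
      push_cast
      ring
    rw [h]
    exact S4.sub S3
  rw [trace_khat HS, Summable.tsum_eq_zero_add S1]
  have h0 : ((0 + 1 : ℕ) : ℂ) * tv B i j X 0 = tv B i j X 0 := by
    norm_num
  rw [h0]
  have hsplit : ∑' r : ℕ, ((r + 1 + 1 : ℕ) : ℂ) * tv B i j X (r + 1) =
      (∑' r : ℕ, ((r + 1 : ℕ) : ℂ) * tv B i j X (r + 1)) +
        ∑' r : ℕ, tv B i j X (r + 1) := by
    rw [← Summable.tsum_add S5 S3]
    refine tsum_congr fun r => ?_
    push_cast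
    ring
  rw [hsplit]
  have hmain : ∑' r : ℕ, ((r + 1 : ℕ) : ℂ) * tv B i j X (r + 1) =
      ∑ l ∈ Finset.univ.filter (fun l => l ≠ i),
        (khat B i l (B l j * X * (B l j)ᴴ)).trace := by
    calc ∑' r : ℕ, ((r + 1 : ℕ) : ℂ) * tv B i j X (r + 1)
        = ∑' r : ℕ, ∑ l ∈ Finset.univ.filter (fun l => l ≠ i),
            ((r + 1 : ℕ) : ℂ) * tv B i l (B l j * X * (B l j)ᴴ) r := by
          refine tsum_congr fun r => ?_
          rw [tv_succ, Finset.mul_sum]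
      _ = ∑ l ∈ Finset.univ.filter (fun l => l ≠ i), ∑' r : ℕ,
            ((r + 1 : ℕ) : ℂ) * tv B i l (B l j * X * (B l j)ᴴ) r :=
          Summable.tsum_finsetSum fun l _ => summable_wtv HS i l _
      _ = _ := Finset.sum_congr rfl fun l _ => (trace_khat HS i l _).symm
  have hhit : tv B i j X 0 + ∑' r : ℕ, tv B i j X (r + 1) = hitSum B i j X := by
    rw [hitSum_eq, Summable.tsum_eq_zero_add (summable_tv HS i j X)]
  rw [hmain]
  ring_nf
  rw [← hhit]
  ring

end AuxRec

section AuxPsd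

variable {n : ℕ}

lemma linmap_eq_trace_of_psd (φ : Mn n →ₗ[ℂ] ℂ)
    (hpsd : ∀ M : Mn n, M.PosSemidef → φ M = M.trace) (C : Mn n) :
    φ C = C.trace := by
  have hone : φ 1 = (1 : Mn n).trace := hpsd _ Matrix.PosSemidef.one
  have hCC : φ (Cᴴ * C) = (Cᴴ * C).trace :=
    hpsd _ (Matrix.posSemidef_conjTranspose_mul_self C)
  have e1 : ((1 + C)ᴴ * (1 + C) : Mn n) = 1 + C + Cᴴ + Cᴴ * C := by
    rw [Matrix.conjTranspose_add, Matrix.conjTranspose_one, Matrix.add_mul, Matrix.mul_add,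
      Matrix.mul_add, Matrix.one_mul, Matrix.one_mul, Matrix.mul_one]
    abel
  have e2 : ((1 + Complex.I • C)ᴴ * (1 + Complex.I • C) : Mn n)
      = 1 + Complex.I • C - Complex.I • Cᴴ + Cᴴ * C := by
    rw [Matrix.conjTranspose_add, Matrix.conjTranspose_smul, Matrix.conjTranspose_one,
      show (star Complex.I : ℂ) = -Complex.I from Complex.conj_I, Matrix.add_mul, Matrix.mul_add, Matrix.mul_add, Matrix.one_mul,
      Matrix.one_mul, Matrix.mul_one, Matrix.smul_mul, Matrix.mul_smul, smul_smul]
    rw [show (-Complex.I) * Complex.I = 1 by simp [Complex.I_mul_I], one_smul, neg_smul]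
    abel
  have hA0 : φ ((1 + C)ᴴ * (1 + C)) = ((1 + C)ᴴ * (1 + C)).trace :=
    hpsd _ (Matrix.posSemidef_conjTranspose_mul_self _)
  have hB0 : φ ((1 + Complex.I • C)ᴴ * (1 + Complex.I • C)) =
      ((1 + Complex.I • C)ᴴ * (1 + Complex.I • C)).trace :=
    hpsd _ (Matrix.posSemidef_conjTranspose_mul_self _)
  rw [e1] at hA0
  rw [e2] at hB0
  have hA : φ 1 + φ C + φ Cᴴ + φ (Cᴴ * C) =
      (1 : Mn n).trace + C.trace + Cᴴ.trace + (Cᴴ * C).trace := by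
    simpa [map_add, Matrix.trace_add] using hA0
  have hB : φ 1 + Complex.I * φ C - Complex.I * φ Cᴴ + φ (Cᴴ * C) =
      (1 : Mn n).trace + Complex.I * C.trace - Complex.I * Cᴴ.trace + (Cᴴ * C).trace := by
    have := hB0
    simp only [map_add, map_sub, _root_.map_smul, smul_eq_mul, Matrix.trace_add,
      Matrix.trace_sub, Matrix.trace_smul] at this
    simpa [smul_eq_mul] using this
  have hI2 : Complex.I * Complex.I = -1 := Complex.I_mul_I
  linear_combination (1/2 : ℂ) * hA - (Complex.I/2) * hB +
    ((Complex.I - 1)/2) * hone + ((Complex.I - 1)/2) * hCC +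
    ((φ C - C.trace + Cᴴ.trace - φ Cᴴ)/2) * hI2

end AuxPsd

section AuxHit

variable {n k : ℕ} {B : Fin k → Fin k → Mn n}

lemma hit_eq_trace (HS : SumHyp B)
    (hB : ∀ j : Fin k, ∑ i : Fin k, (B i j)ᴴ * B i j = 1)
    (hHit : ∀ i l : Fin k, i ≠ l → ∀ σ : Mn n, σ.PosSemidef → hitSum B i l σ = σ.trace) :
    ∀ (i j : Fin k) (X : Mn n), hitSum B i j X = X.trace := by
  have hne : ∀ (i j : Fin k), i ≠ j → ∀ X : Mn n, hitSum B i j X = X.trace := by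
    intro i j hij X
    exact linmap_eq_trace_of_psd
      { toFun := hitSum B i j
        map_add' := hitSum_add HS i j
        map_smul' := by intro a x; simpa using hitSum_smul HS i j a x }
      (fun M hM => hHit i j hij M hM) X
  intro i j X
  rcases eq_or_ne i j with rfl | hij
  · rw [hitSum_rec HS i i X]
    have hterm : ∀ l : Fin k, (B l i * X * (B l i)ᴴ).trace = ((B l i)ᴴ * B l i * X).trace := by
      intro l
      rw [Matrix.trace_mul_cycle]
    calc (B i i * X * (B i i)ᴴ).trace +
          ∑ l ∈ Finset.univ.filter (fun l => l ≠ i), hitSum B i l (B l i * X * (B l i)ᴴ)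
        = (B i i * X * (B i i)ᴴ).trace +
          ∑ l ∈ Finset.univ.filter (fun l => l ≠ i), (B l i * X * (B l i)ᴴ).trace := by
          congr 1
          refine Finset.sum_congr rfl fun l hl => ?_
          have hli : i ≠ l := fun h => ((Finset.mem_filter.1 hl).2 h.symm).elim
          exact hne i l hli _
      _ = ∑ l : Fin k, (B l i * X * (B l i)ᴴ).trace := by
          rw [Finset.filter_ne', add_comm, Finset.sum_erase_add _ _ (Finset.mem_univ i)]
      _ = ∑ l : Fin k, ((B l i)ᴴ * B l i * X).trace := Finset.sum_congr rfl fun l _ => hterm l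
      _ = ((∑ l : Fin k, (B l i)ᴴ * B l i) * X).trace := by
          rw [Finset.sum_mul, Matrix.trace_sum]
      _ = X.trace := by rw [hB i, Matrix.one_mul]
  · exact hne i j hij X

end AuxHit

section AuxBlock

variable {n k : ℕ} (B : Fin k → Fin k → Mn n)

lemma blockRep_apply (v : BlockVec n k) (i : Fin k) :
    blockRep B v i = ∑ j : Fin k, B i j * v j * (B i j)ᴴ := by
  simp [blockRep]

lemma omegaMap_apply (v : BlockVec n k) (p : Fin k) :
    omegaMap n k v p =
      (∑ j : Fin k, (v j).trace) • (((k : ℂ) * (n : ℂ))⁻¹ • (1 : Mn n)) := by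
  simp [omegaMap, LinearMap.toSpanSingleton_apply]
  exact Finset.sum_smul.symm

lemma trace_omegaMap (v : BlockVec n k) (p : Fin k) :
    (omegaMap n k v p).trace =
      (∑ j : Fin k, (v j).trace) * (((k : ℂ) * (n : ℂ))⁻¹ * (n : ℂ)) := by
  rw [omegaMap_apply, Matrix.trace_smul, Matrix.trace_smul, Matrix.trace_one]
  simp [smul_eq_mul, Fintype.card_fin]

end AuxBlock

set_option maxHeartbeats 1000000 in
/-- Random Target Lemma for OQWs (Corollary 2): under the hypotheses of the
Mean Hitting Time Formula, with `D̂` invertible and `Tr(k̂_{ii}(η)) = c Tr(η)` for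
all `i, η`, the target time `t_⊙(ρ) = ∑_i Tr((D̂⁻¹N̂)_{ij}(ρ))` does not depend on
`j`: it equals `(∑_i Tr(Ẑ_{ii}(ρ))) - 1` for every density matrix `ρ`. -/
theorem random_target_lemma {n k : ℕ} (hn : 2 ≤ n) (hk : 2 ≤ k)
    (B : Fin k → Fin k → Mn n) (hB : IsOQW B) (herg : IsErgodic B)
    (hSum : ∀ (i j : Fin k) (X : Mn n) (a b : Fin n),
      Summable fun r : ℕ => ((r + 1 : ℕ) : ℝ) *
        ‖(∑ x ∈ pathsSet k i j (r+1),
            pathProd B (r+1) x * X * (pathProd B (r+1) x)ᴴ) a b‖)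
    (hHit : ∀ i l : Fin k, i ≠ l → ∀ σ : Mn n, σ.PosSemidef →
      hitSum B i l σ = σ.trace)
    (Z : Module.End ℂ (BlockVec n k))
    (hZ1 : Z * (1 - blockRep B + omegaMap n k) = 1)
    (hZ2 : (1 - blockRep B + omegaMap n k) * Z = 1)
    (Kinv : Fin k → Mn n → Mn n)
    (hKinv : ∀ i : Fin k, Function.LeftInverse (Kinv i) (khat B i i) ∧
      Function.RightInverse (Kinv i) (khat B i i))
    (c : ℝ)
    (hc : ∀ (i : Fin k) (η : Mn n), (khat B i i η).trace = (c : ℂ) * η.trace) :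
    ∀ (ρ : Mn n), ρ.PosSemidef → ρ.trace = 1 → ∀ j : Fin k,
      ∑ i : Fin k, (Kinv i (if i = j then 0 else khat B i j ρ)).trace =
        (∑ i : Fin k, (blockOf Z i i ρ).trace) - 1 := by
  intro ρ hρ hρtr j
  have HS : SumHyp B := hSum
  have hnne : (n : ℂ) ≠ 0 := Nat.cast_ne_zero.2 (by omega)
  have hkne : (k : ℂ) ≠ 0 := Nat.cast_ne_zero.2 (by omega)
  have hkn : ((k : ℂ) * (n : ℂ)) ≠ 0 := mul_ne_zero hkne hnne
  -- `c ≠ 0`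
  have i0 : Fin k := ⟨0, by omega⟩
  have hc0 : (c : ℂ) ≠ 0 := by
    intro h
    have h1 := hc i0 (Kinv i0 1)
    rw [(hKinv i0).2 1, h, zero_mul, Matrix.trace_one] at h1
    rw [Fintype.card_fin] at h1
    exact hnne h1
  -- trace of `Kinv`
  have hKtr : ∀ (i : Fin k) (Y : Mn n), (Kinv i Y).trace = (c : ℂ)⁻¹ * Y.trace := by
    intro i Y
    have h1 := hc i (Kinv i Y)
    rw [(hKinv i).2 Y] at h1
    rw [h1, ← mul_assoc, inv_mul_cancel₀ hc0, one_mul]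
  have hKinv0 : ∀ i : Fin k, Kinv i 0 = 0 := by
    intro i
    have h0 : khat B i i 0 = 0 := by
      rw [khat_eq]
      calc ∑' r : ℕ, ((r + 1 : ℕ) : ℂ) • pmat B i i (0 : Mn n) r
          = ∑' _ : ℕ, (0 : Mn n) := by
            refine tsum_congr fun r => ?_
            rw [pmat]
            simp
        _ = 0 := tsum_zero
    conv_lhs => rw [← h0]
    exact (hKinv i).1 0
  -- trace-sum invariance
  have Tphi : ∀ v : BlockVec n k,
      ∑ i : Fin k, (blockRep B v i).trace = ∑ p : Fin k, (v p).trace := by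
    intro v
    calc ∑ i : Fin k, (blockRep B v i).trace
        = ∑ i : Fin k, ∑ q : Fin k, (B i q * v q * (B i q)ᴴ).trace := by
          refine Finset.sum_congr rfl fun i _ => ?_
          rw [blockRep_apply, Matrix.trace_sum]
      _ = ∑ q : Fin k, ∑ i : Fin k, ((B i q)ᴴ * B i q * v q).trace := by
          rw [Finset.sum_comm]
          exact Finset.sum_congr rfl fun q _ => Finset.sum_congr rfl fun i _ =>
            Matrix.trace_mul_cycle (B i q) (v q) (B i q)ᴴ
      _ = ∑ q : Fin k, ((∑ i : Fin k, (B i q)ᴴ * B i q) * v q).trace := by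
          refine Finset.sum_congr rfl fun q _ => ?_
          rw [Finset.sum_mul, Matrix.trace_sum]
      _ = ∑ q : Fin k, (v q).trace := by
          refine Finset.sum_congr rfl fun q _ => ?_
          rw [hB q, Matrix.one_mul]
  have Tomega : ∀ v : BlockVec n k,
      ∑ p : Fin k, (omegaMap n k v p).trace = ∑ p : Fin k, (v p).trace := by
    intro v
    calc ∑ p : Fin k, (omegaMap n k v p).trace
        = ∑ _p : Fin k, (∑ q : Fin k, (v q).trace) * (((k : ℂ) * (n : ℂ))⁻¹ * (n : ℂ)) :=
          Finset.sum_congr rfl fun p _ => trace_omegaMap v p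
      _ = (k : ℂ) * ((∑ q : Fin k, (v q).trace) * (((k : ℂ) * (n : ℂ))⁻¹ * (n : ℂ))) := by
          rw [Finset.sum_const, Finset.card_univ, Fintype.card_fin, nsmul_eq_mul]
      _ = ∑ q : Fin k, (v q).trace := by
          field_simp
  have hZpt : ∀ v : BlockVec n k,
      Z v - blockRep B (Z v) + omegaMap n k (Z v) = v := by
    intro v
    have h := LinearMap.congr_fun hZ2 v
    simpa [Module.End.mul_apply, LinearMap.sub_apply, LinearMap.add_apply] using h
  have TZ : ∀ v : BlockVec n k,
      ∑ p : Fin k, (Z v p).trace = ∑ p : Fin k, (v p).trace := by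
    intro v
    have h3 := congrArg (fun w : BlockVec n k => ∑ p : Fin k, (w p).trace) (hZpt v)
    simp only [Pi.add_apply, Pi.sub_apply, Matrix.trace_add, Matrix.trace_sub] at h3
    rw [Finset.sum_add_distrib, Finset.sum_sub_distrib, Tphi (Z v), Tomega (Z v)] at h3
    calc ∑ p : Fin k, (Z v p).trace
        = ∑ p : Fin k, (Z v p).trace - ∑ p : Fin k, (Z v p).trace
          + ∑ p : Fin k, (Z v p).trace := by ring
      _ = ∑ p : Fin k, (v p).trace := h3
  -- additivity of `X ↦ Tr (khat B i l X)` over finite sums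
  have ktr_zero : ∀ i l : Fin k, (khat B i l (0 : Mn n)).trace = 0 := by
    intro i l
    have := ktr_smul HS i l 0 0
    simpa using this
  have ktr_sum : ∀ (i l : Fin k) (m : Fin k → Mn n),
      (khat B i l (∑ q : Fin k, m q)).trace = ∑ q : Fin k, (khat B i l (m q)).trace := by
    intro i l m
    classical
    refine Finset.induction_on Finset.univ ?_ ?_
    · simpa using ktr_zero i l
    · intro a s ha ih
      rw [Finset.sum_insert ha, Finset.sum_insert ha, ktr_add HS, ih]
  -- master equation
  have master : ∀ (i : Fin k) (v : BlockVec n k),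
      ∑ q : Fin k, (khat B i q (v q)).trace =
        (∑ l : Fin k, (khat B i l (blockRep B v l)).trace)
          - (c : ℂ) * (blockRep B v i).trace + ∑ q : Fin k, (v q).trace := by
    intro i v
    have step : ∀ q : Fin k, (khat B i q (v q)).trace =
        (∑ l : Fin k, (khat B i l (B l q * v q * (B l q)ᴴ)).trace)
          - (c : ℂ) * (B i q * v q * (B i q)ᴴ).trace + (v q).trace := by
      intro q
      have h1 := ktr_rec HS i q (v q)
      rw [hit_eq_trace HS hB hHit i q (v q)] at h1
      have h2 : ∑ l ∈ Finset.univ.filter (fun l => l ≠ i),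
          (khat B i l (B l q * v q * (B l q)ᴴ)).trace
          = (∑ l : Fin k, (khat B i l (B l q * v q * (B l q)ᴴ)).trace)
            - (khat B i i (B i q * v q * (B i q)ᴴ)).trace := by
        rw [Finset.filter_ne']
        exact Finset.sum_erase_eq_sub (Finset.mem_univ i)
      rw [h2, hc i] at h1
      rw [h1]
    calc ∑ q : Fin k, (khat B i q (v q)).trace
        = ∑ q : Fin k, ((∑ l : Fin k, (khat B i l (B l q * v q * (B l q)ᴴ)).trace)
            - (c : ℂ) * (B i q * v q * (B i q)ᴴ).trace + (v q).trace) :=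
          Finset.sum_congr rfl fun q _ => step q
      _ = (∑ q : Fin k, ∑ l : Fin k, (khat B i l (B l q * v q * (B l q)ᴴ)).trace)
            - (c : ℂ) * ∑ q : Fin k, (B i q * v q * (B i q)ᴴ).trace
            + ∑ q : Fin k, (v q).trace := by
          rw [Finset.sum_add_distrib, Finset.sum_sub_distrib, Finset.mul_sum]
      _ = (∑ l : Fin k, (khat B i l (blockRep B v l)).trace)
            - (c : ℂ) * (blockRep B v i).trace + ∑ q : Fin k, (v q).trace := by
          congr 1
          · congr 1
            · rw [Finset.sum_comm]
              refine Finset.sum_congr rfl fun l _ => ?_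
              rw [blockRep_apply, ktr_sum i l]
            · rw [blockRep_apply, Matrix.trace_sum]
  -- key identity (Mean Hitting Time Formula, trace form)
  have trace_single : ∀ (jp p : Fin k),
      ((Pi.single jp ρ : BlockVec n k) p).trace = if p = jp then 1 else 0 := by
    intro jp p
    rw [Pi.single_apply]
    split_ifs with h
    · exact hρtr
    · simp
  have sum_trace_single : ∀ jp : Fin k,
      ∑ p : Fin k, ((Pi.single jp ρ : BlockVec n k) p).trace = 1 := by
    intro jp
    rw [Finset.sum_congr rfl fun p _ => trace_single jp p]
    simp
  have key : ∀ i jp : Fin k, (khat B i jp ρ).trace =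
      (((k : ℂ) * (n : ℂ))⁻¹ * ∑ l : Fin k, (khat B i l (1 : Mn n)).trace)
        - (c : ℂ) * (Z (Pi.single jp ρ) i).trace
        - (c : ℂ) * (((k : ℂ) * (n : ℂ))⁻¹ * (n : ℂ))
        + (if i = jp then (c : ℂ) else 0) + 1 := by
    intro i jp
    set w : BlockVec n k := Pi.single jp ρ with hw
    have hTZw : ∑ p : Fin k, (Z w p).trace = 1 := by
      rw [TZ w]
      exact sum_trace_single jp
    have hOm : ∀ p : Fin k, omegaMap n k (Z w) p = ((k : ℂ) * (n : ℂ))⁻¹ • (1 : Mn n) := by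
      intro p
      rw [omegaMap_apply, hTZw, one_smul]
    have hPhi : ∀ p : Fin k, blockRep B (Z w) p
        = Z w p + ((k : ℂ) * (n : ℂ))⁻¹ • (1 : Mn n) - w p := by
      intro p
      have h := congrFun (hZpt w) p
      simp only [Pi.add_apply, Pi.sub_apply] at h
      have := hOm p
      -- h : Z w p - blockRep B (Z w) p + omegaMap n k (Z w) p = w p
      rw [this] at h
      have h2 : blockRep B (Z w) p =
          Z w p + ((k : ℂ) * (n : ℂ))⁻¹ • (1 : Mn n) - w p := by
        have := h
        abel_nf at this ⊢
        linear_combination (norm := abel_nf) -this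
      exact h2
    have hM := master i (Z w)
    -- rewrite the ktr-sum over blockRep
    have e1 : ∑ l : Fin k, (khat B i l (blockRep B (Z w) l)).trace
        = (∑ l : Fin k, (khat B i l (Z w l)).trace)
          + (((k : ℂ) * (n : ℂ))⁻¹ * ∑ l : Fin k, (khat B i l (1 : Mn n)).trace)
          - (khat B i jp ρ).trace := by
      have hterm : ∀ l : Fin k, (khat B i l (blockRep B (Z w) l)).trace
          = (khat B i l (Z w l)).trace
            + ((k : ℂ) * (n : ℂ))⁻¹ * (khat B i l (1 : Mn n)).trace
            - (khat B i l (w l)).trace := by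
        intro l
        rw [hPhi l]
        have hsub : ∀ X Y : Mn n, (khat B i l (X - Y)).trace
            = (khat B i l X).trace - (khat B i l Y).trace := by
          intro X Y
          have : X - Y = X + (-1 : ℂ) • Y := by
            rw [neg_one_smul]
            abel
          rw [this, ktr_add HS, ktr_smul HS]
          ring
        rw [hsub, ktr_add HS, ktr_smul HS]
      have hws : ∑ l : Fin k, (khat B i l (w l)).trace = (khat B i jp ρ).trace := by
        have hterm2 : ∀ l : Fin k, (khat B i l (w l)).trace
            = if l = jp then (khat B i l ρ).trace else 0 := by
          intro l
          rw [hw, Pi.single_apply]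
          split_ifs with h
          · rfl
          · exact ktr_zero i l
        rw [Finset.sum_congr rfl fun l _ => hterm2 l]
        rw [Finset.sum_ite_eq' Finset.univ jp (fun l => (khat B i l ρ).trace)]
        rw [if_pos (Finset.mem_univ jp)]
      rw [Finset.sum_congr rfl fun l _ => hterm l]
      rw [Finset.sum_sub_distrib, Finset.sum_add_distrib, ← Finset.mul_sum, hws]
    have e2 : (blockRep B (Z w) i).trace
        = (Z w i).trace + ((k : ℂ) * (n : ℂ))⁻¹ * (n : ℂ)
          - (if i = jp then 1 else 0) := by
      rw [hPhi i, Matrix.trace_sub, Matrix.trace_add, Matrix.trace_smul, Matrix.trace_one,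
        Fintype.card_fin, trace_single jp i]
      simp only [smul_eq_mul]
    have h5 : (khat B i jp ρ).trace =
        (((k : ℂ) * (n : ℂ))⁻¹ * ∑ l : Fin k, (khat B i l (1 : Mn n)).trace)
          - (c : ℂ) * (blockRep B (Z w) i).trace + ∑ p : Fin k, (Z w p).trace := by
      linear_combination hM + e1
    rw [h5, e2, hTZw]
    split_ifs with h
    · ring
    · ring
  -- for i ≠ j
  have hzkey : ∀ i : Fin k, i ≠ j → (khat B i j ρ).trace =
      (c : ℂ) * (blockOf Z i i ρ).trace - (c : ℂ) * (Z (Pi.single j ρ) i).trace := by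
    intro i hij
    have k1 := key i j
    rw [if_neg hij] at k1
    have k2 := key i i
    rw [if_pos rfl] at k2
    have hbo : (blockOf Z i i ρ).trace = (Z (Pi.single i ρ) i).trace := rfl
    rw [hbo]
    have k3 : (khat B i i ρ).trace = (c : ℂ) := by
      rw [hc i ρ, hρtr, mul_one]
    linear_combination k1 - k2 + k3
  -- final computation
  calc ∑ i : Fin k, (Kinv i (if i = j then 0 else khat B i j ρ)).trace
      = ∑ i : Fin k, (if i = j then 0 else (c : ℂ)⁻¹ * (khat B i j ρ).trace) := by
        refine Finset.sum_congr rfl fun i _ => ?_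
        split_ifs with h
        · rw [hKinv0 i, Matrix.trace_zero]
        · rw [hKtr i]
    _ = ∑ i ∈ Finset.univ.erase j, (c : ℂ)⁻¹ * (khat B i j ρ).trace := by
        rw [← Finset.sum_erase_add _ _ (Finset.mem_univ j), if_pos rfl, add_zero]
        exact Finset.sum_congr rfl fun i hi => if_neg (Finset.ne_of_mem_erase hi)
    _ = ∑ i ∈ Finset.univ.erase j,
          ((blockOf Z i i ρ).trace - (Z (Pi.single j ρ) i).trace) := by
        refine Finset.sum_congr rfl fun i hi => ?_
        rw [hzkey i (Finset.ne_of_mem_erase hi), mul_sub, ← mul_assoc, ← mul_assoc,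
          inv_mul_cancel₀ hc0, one_mul, one_mul]
    _ = (∑ i : Fin k, (blockOf Z i i ρ).trace) - 1 := by
        rw [Finset.sum_sub_distrib,
          Finset.sum_erase_eq_sub (Finset.mem_univ j),
          Finset.sum_erase_eq_sub (Finset.mem_univ j)]
        have hone : ∑ i : Fin k, (Z (Pi.single j ρ) i).trace = 1 := by
          rw [TZ]
          exact sum_trace_single j
        have hjj : (blockOf Z j j ρ).trace = (Z (Pi.single j ρ) j).trace := rfl
        rw [hone, hjj]
        ring


end
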